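/- Let t ∈ ω^{<ω}, α ∈ K_t, and p > Σ_t := ⟨Σ^t_{|t|},0⟩ be such that α|p is placed with witness t'. Then t ⊆ t'. -/

import Mathlib

/-- Triangular numbers. -/
def tri (m : ℕ) : ℕ := m * (m + 1) / 2

/-- The pairing `⟨n,p⟩ := (Σ_{k ≤ n+p} k) + p`. -/
def pairN (n p : ℕ) : ℕ := tri (n + p) + p

/-- `Σ^t_k := Σ_{j<k} (t(j) + 2)`. -/
def sigT (t : List ℕ) (k : ℕ) : ℕ := ((t.take k).map (· + 2)).sum

/-- The set `K_t ⊆ 2^ω`: for each `k < |t|`, the vertical slices numbered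
`Σ^t_k, …, Σ^t_k + t(k) + 1` are prescribed: the `i`-th of them is
`(w_{t(k)})_i · 0^∞`, except that the `0`-th one additionally carries a `1`
at position `t(k) + 1` (i.e. equals `(w_{t(k)})₀·0^{t(k)+1-|(w_{t(k)})₀|}·1·0^∞`). -/
def Kt (w : ℕ → List Bool) (t : List ℕ) : Set (ℕ → Bool) :=
  {α | ∀ k < t.length, ∀ i < t.getD k 0 + 2, ∀ p,
    α (pairN (sigT t k + i) p) =
      if i = 0 ∧ p = t.getD k 0 + 1 then true
      else (w (t.getD k 0)).getD (pairN i p) false}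

/-- The clopen piece `K^ε_t := {α ∈ K_t : α(⟨Σ^t_{|t|}, 0⟩) = ε}`. -/
def Keps (w : ℕ → List Bool) (t : List ℕ) (ε : Bool) : Set (ℕ → Bool) :=
  {α | α ∈ Kt w t ∧ α (pairN (sigT t t.length) 0) = ε}

/-- `M(q) := max {m : Σ_{k≤m} k ≤ q}`. -/
def Mq (q : ℕ) : ℕ := Nat.findGreatest (fun m => tri m ≤ q) q

/-- The second inverse-pairing coordinate: `(q)₁ := q − Σ_{k≤M(q)} k`. -/
def unpair1 (q : ℕ) : ℕ := q - tri (Mq q)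

/-- The first inverse-pairing coordinate: `(q)₀ := M(q) − (q)₁`. -/
def unpair0 (q : ℕ) : ℕ := Mq q - unpair1 q

/-- The basic clopen set `N_u := {α : u ⊆ α}`. -/
def Nu (u : List Bool) : Set (ℕ → Bool) := {α | ∀ k < u.length, α k = u.getD k false}

/-- `u` is placed with witness `t`: `N_u ∩ K_t ≠ ∅`, `(|u|−1)₀ = Σ^t_{|t|}`, and
`u(|u|−1) = 1` whenever `(|u|−1)₁ > 0`. -/
def PlacedWit (w : ℕ → List Bool) (u : List Bool) (t : List ℕ) : Prop :=
  (Nu u ∩ Kt w t).Nonempty ∧ unpair0 (u.length - 1) = sigT t t.length ∧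
  (0 < unpair1 (u.length - 1) → u.getD (u.length - 1) false = true)

/-- `u` is placed: `u ≠ ∅` and it has some witness. -/
def Placed (w : ℕ → List Bool) (u : List Bool) : Prop :=
  u ≠ [] ∧ ∃ t : List ℕ, PlacedWit w u t

/-- The initial segment `α|p` as a finite sequence. -/
def restr (α : ℕ → Bool) (p : ℕ) : List Bool := List.ofFn fun i : Fin p => α i

lemma two_tri (m : ℕ) : 2 * tri m = m * (m + 1) := by
  have : 2 ∣ m * (m + 1) := Nat.even_mul_succ_self m |>.two_dvd
  unfold tri; omega
lemma tri_succ (m : ℕ) : tri (m + 1) = tri m + (m + 1) := by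
  have h1 := two_tri m; have h2 := two_tri (m+1); nlinarith
lemma self_le_tri (m : ℕ) : m ≤ tri m := by
  have := two_tri m; nlinarith
lemma tri_mono {a b : ℕ} (h : a ≤ b) : tri a ≤ tri b := by
  have h1 := two_tri a; have h2 := two_tri b; nlinarith
lemma tri_strict_mono {a b : ℕ} (h : a < b) : tri a < tri b := by
  have h1 := tri_succ a; have h2 := tri_mono (show a + 1 ≤ b from h); omega
lemma sigT_succ (t : List ℕ) (k : ℕ) (hk : k < t.length) :
    sigT t (k + 1) = sigT t k + (t.getD k 0 + 2) := by
  unfold sigT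
  rw [List.take_succ, List.getElem?_eq_getElem hk]
  simp [List.getD_eq_getElem?_getD, List.getElem?_eq_getElem hk]
  rw [List.take_succ, List.getElem?_map, List.getElem?_eq_getElem hk]
  simp
lemma sigT_mono (t : List ℕ) {a b : ℕ} (h : a ≤ b) : sigT t a ≤ sigT t b := by
  unfold sigT
  rw [show b = a + (b - a) by omega, List.take_add]
  simp
lemma sigT_prefix {s t : List ℕ} (h : s <+: t) {k : ℕ} (hk : k ≤ s.length) :
    sigT s k = sigT t k := by
  obtain ⟨r, rfl⟩ := h
  unfold sigT
  rw [List.take_append_of_le_length hk]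
lemma getD_prefix {s t : List ℕ} (h : s <+: t) {k : ℕ} (hk : k < s.length) :
    s.getD k 0 = t.getD k 0 := by
  obtain ⟨r, rfl⟩ := h
  rw [List.getD_append _ _ _ _ hk]
lemma tri_Mq_le (q : ℕ) : tri (Mq q) ≤ q :=
  Nat.findGreatest_spec (P := fun m => tri m ≤ q) (Nat.zero_le q) (by simp [tri])
lemma lt_tri_Mq_succ (q : ℕ) : q < tri (Mq q + 1) := by
  by_contra h
  push_neg at h
  have hle : Mq q + 1 ≤ q := le_trans (self_le_tri _) h
  exact absurd h (Nat.findGreatest_is_greatest (P := fun m => tri m ≤ q) (Nat.lt_succ_self _) hle)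
lemma unpair1_le_Mq (q : ℕ) : unpair1 q ≤ Mq q := by
  have h1 := tri_Mq_le q; have h2 := lt_tri_Mq_succ q; have h3 := tri_succ (Mq q)
  unfold unpair1; omega
lemma unpair_add (q : ℕ) : unpair0 q + unpair1 q = Mq q := by
  have := unpair1_le_Mq q; unfold unpair0; omega
lemma pairN_unpair (q : ℕ) : pairN (unpair0 q) (unpair1 q) = q := by
  have h1 := tri_Mq_le q
  unfold pairN
  rw [unpair_add]
  unfold unpair1; omega
lemma Mq_ge {q m : ℕ} (h : tri m ≤ q) : m ≤ Mq q :=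
  Nat.le_findGreatest (le_trans (self_le_tri m) h) h
lemma Kt_prefix {w : ℕ → List Bool} {s t : List ℕ} (h : s <+: t) :
    Kt w t ⊆ Kt w s := by
  intro α hα k hk i hi r
  have hkt : k < t.length := lt_of_lt_of_le hk h.length_le
  have hg : s.getD k 0 = t.getD k 0 := getD_prefix h hk
  have hs : sigT s k = sigT t k := sigT_prefix h (le_of_lt hk)
  rw [hg, hs]
  exact hα k hkt i (hg ▸ hi) r
lemma restr_length (α : ℕ → Bool) (p : ℕ) : (restr α p).length = p := by
  simp [restr]
lemma restr_getD (α : ℕ → Bool) {p k : ℕ} (h : k < p) :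
    (restr α p).getD k false = α k := by
  rw [List.getD_eq_getElem?_getD]
  simp [restr, h]

/-- if `α ∈ K_t` and `p > Σ_t = ⟨Σ^t_{|t|}, 0⟩` is such that `α|p` is
placed with witness `t'`, then `t ⊆ t'`. -/
theorem stmt18 (w : ℕ → List Bool) (hw : ∀ n, (w n).length = n + 1)
    (t t' : List ℕ) (α : ℕ → Bool) (hα : α ∈ Kt w t) (p : ℕ)
    (hp : pairN (sigT t t.length) 0 < p) (hwit : PlacedWit w (restr α p) t') :
    t <+: t' := by
  obtain ⟨⟨β, hβN, hβK⟩, h0, h1⟩ := hwit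
  rw [restr_length] at h0 h1
  have hp0 : 0 < p := lt_of_le_of_lt (Nat.zero_le _) hp
  have hβα : ∀ k, k < p → β k = α k := fun k hk =>
    (hβN k (by rw [restr_length]; exact hk)).trans (restr_getD α hk)
  have hα1 : 0 < unpair1 (p - 1) → α (p - 1) = true := fun h =>
    (restr_getD α (by omega)).symm.trans (h1 h)
  clear hβN h1
  revert hα hp
  induction t using List.reverseRecOn with
  | nil => exact fun _ _ => List.nil_prefix
  | append_singleton s n ih =>
    intro hα hp
    set L := s.length with hL
    have hst : s <+: s ++ [n] := ⟨[n], rfl⟩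
    have hsigL : sigT (s ++ [n]) L = sigT s L := (sigT_prefix hst (le_refl _)).symm
    have hgetL : (s ++ [n]).getD L 0 = n := by
      simp [List.getD_eq_getElem?_getD, List.getElem?_append_right, hL]
    have hsig_top : sigT (s ++ [n]) (L + 1) = sigT s L + (n + 2) := by
      rw [sigT_succ _ L (by simp [hL]), hsigL, hgetL]
    have htlen : (s ++ [n]).length = L + 1 := by simp [hL]
    rw [htlen, hsig_top] at hp
    -- clean form of the Kt conditions on the slice sigT s L (i = 0)
    have hKt : ∀ m, α (pairN (sigT s L) m)
        = if m = n + 1 then true else (w n).getD (pairN 0 m) false := by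
      intro m
      have h := hα L (by simp [hL]) 0 (by rw [hgetL]; omega) m
      rw [hsigL, add_zero, hgetL] at h
      simpa using h
    -- IH
    have hsp : s <+: t' := by
      refine ih (Kt_prefix hst hα) ?_
      refine lt_of_le_of_lt ?_ hp
      unfold pairN
      simp only [add_zero]
      exact tri_mono (by omega)
    have htri_le : tri (sigT s L + (n + 2)) ≤ p - 1 := by
      have : pairN (sigT s L + (n + 2)) 0 = tri (sigT s L + (n + 2)) := by
        simp [pairN]
      omega
    by_cases hL' : t'.length ≤ L
    · -- then t' = s : contradiction via the third placement condition
      exfalso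
      have hts : s = t' := hsp.eq_of_length (le_antisymm hsp.length_le hL')
      subst hts
      rw [show sigT s s.length = sigT s L from rfl] at h0
      have hM : sigT s L + (n + 2) ≤ Mq (p - 1) := Mq_ge htri_le
      have hadd := unpair_add (p - 1)
      rw [h0] at hadd
      have hm2 : n + 2 ≤ unpair1 (p - 1) := by omega
      have heq : pairN (sigT s L) (unpair1 (p - 1)) = p - 1 := by
        rw [← h0]; exact pairN_unpair _
      have htrue := hα1 (by omega)
      rw [← heq, hKt] at htrue
      rw [if_neg (by omega), List.getD_eq_default] at htrue
      · exact Bool.false_ne_true htrue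
      · have : unpair1 (p - 1) ≤ pairN 0 (unpair1 (p - 1)) := by
          simp [pairN]
        rw [hw n]; omega
    · push_neg at hL'
      have hsigL' : sigT t' L = sigT s L := (sigT_prefix hsp (le_refl _)).symm
      set n' := t'.getD L 0 with hn'
      have hsig't : sigT t' (L + 1) = sigT s L + (n' + 2) := by
        rw [sigT_succ _ L hL', hsigL']
      have hKt' : ∀ m, β (pairN (sigT s L) m)
          = if m = n' + 1 then true else (w n').getD (pairN 0 m) false := by
        intro m
        have h := hβK L hL' 0 (by omega) m
        rw [hsigL', add_zero] at h
        simp only [eq_self_iff_true, true_and] at h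
        rw [← hn'] at h
        exact h
      have hnn : n' = n := by
        by_contra hnn
        rcases lt_or_gt_of_ne hnn with hlt | hgt
        · -- n' < n : look at position pairN (sigT s L) (n+1) < p
          have hq0 : pairN (sigT s L) (n + 1) < p := by
            have h1' : tri (sigT s L + (n + 2))
                = tri (sigT s L + (n + 1)) + (sigT s L + (n + 1) + 1) := by
              rw [show sigT s L + (n + 2) = sigT s L + (n + 1) + 1 by omega]
              exact tri_succ _
            have : pairN (sigT s L) (n + 1) = tri (sigT s L + (n + 1)) + (n + 1) := rfl
            omega
          have hA := hKt (n + 1)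
          rw [if_pos rfl] at hA
          have hB := hKt' (n + 1)
          rw [if_neg (by omega), List.getD_eq_default] at hB
          · rw [hβα _ hq0, hA] at hB; exact Bool.false_ne_true hB.symm
          · have : n + 1 ≤ pairN 0 (n + 1) := by simp [pairN]
            rw [hw n']; omega
        · -- n < n' : position pairN (sigT s L) (n'+1) < p since p-1 is in column sigT t' |t'|
          have hq0 : pairN (sigT s L) (n' + 1) < p := by
            have heq : pairN (unpair0 (p - 1)) (unpair1 (p - 1)) = p - 1 := pairN_unpair _
            rw [h0] at heq
            have hmono : sigT t' (L + 1) ≤ sigT t' t'.length := sigT_mono t' hL'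
            have h1' : tri (sigT s L + (n' + 2))
                = tri (sigT s L + (n' + 1)) + (sigT s L + (n' + 1) + 1) := by
              rw [show sigT s L + (n' + 2) = sigT s L + (n' + 1) + 1 by omega]
              exact tri_succ _
            have h2' : tri (sigT s L + (n' + 2)) ≤ tri (sigT t' t'.length) :=
              tri_mono (by omega)
            have h3' : tri (sigT t' t'.length) ≤ p - 1 := by
              have : pairN (sigT t' t'.length) (unpair1 (p - 1))
                  = tri (sigT t' t'.length + unpair1 (p - 1)) + unpair1 (p - 1) := rfl
              have := tri_mono (show sigT t' t'.length ≤ sigT t' t'.length + unpair1 (p - 1) by omega)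
              omega
            have : pairN (sigT s L) (n' + 1) = tri (sigT s L + (n' + 1)) + (n' + 1) := rfl
            omega
          have hB := hKt' (n' + 1)
          rw [if_pos rfl] at hB
          have hA := hKt (n' + 1)
          rw [if_neg (by omega), List.getD_eq_default] at hA
          · rw [hβα _ hq0, hA] at hB; exact Bool.false_ne_true hB
          · have : n' + 1 ≤ pairN 0 (n' + 1) := by simp [pairN]
            rw [hw n]; omega
      -- conclude : t' extends s by n
      obtain ⟨r, rfl⟩ := hsp
      rw [List.prefix_append_right_inj]
      cases r with
      | nil => exfalso; rw [List.append_nil] at hL'; omega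
      | cons a r' =>
        have hga : (s ++ a :: r').getD L 0 = a := by
          rw [List.getD_append_right _ _ _ _ (le_of_eq hL.symm)]
          simp [hL]
        rw [hn', hga] at hnn
        rw [hnn]
        exact ⟨r', rfl⟩
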